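/- With the recursively defined generators a₁,…,a_r (a₁ = (a_r, id)σ, a_i = (id, a_{i−1}) for 2 ≤ i ≤ s−1, a_s = (id, a_{s−1})σ, a_i = (a_{i−1}, id) for s+1 ≤ i ≤ r) and G the topological closure of the subgroup they generate in Ω, for every g ∈ G the diagonal element (g, g) belongs to G. -/

import Mathlib

namespace BinTree

/-- Vertices of the infinite rooted binary tree: finite words over `{0,1}`. -/
abbrev Vertex : Type := List Bool

/-- A function on vertices is a tree automorphism function if it preserves lengths
(levels) and prefixes. -/
def IsTreeAutFun (f : Vertex → Vertex) : Prop :=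
  (∀ v, (f v).length = v.length) ∧ ∀ v w : Vertex, (f (v ++ w)).take v.length = f v

/-- `Ω`: the automorphism group of the infinite rooted binary tree, realized as the
subgroup of permutations of the set of vertices preserving the tree structure. -/
def TreeAut : Subgroup (Equiv.Perm Vertex) where
  carrier := {e | IsTreeAutFun ⇑e}
  one_mem' := ⟨fun _ => rfl, fun v w => by
    simpa using List.take_left (l₁ := v) (l₂ := w)⟩
  mul_mem' := by
    rintro a b ha hb
    obtain ⟨ha1, ha2⟩ := ha
    obtain ⟨hb1, hb2⟩ := hb
    refine ⟨fun v => ?_, fun v w => ?_⟩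
    · simp [Equiv.Perm.mul_apply, ha1, hb1]
    · have hb' : b (v ++ w) = b v ++ (b (v ++ w)).drop v.length := by
        conv_lhs => rw [← List.take_append_drop v.length (b (v ++ w)), hb2]
      have hlen : (b v).length = v.length := hb1 v
      calc ((a * b) (v ++ w)).take v.length
          = (a (b v ++ (b (v ++ w)).drop v.length)).take v.length := by
            rw [Equiv.Perm.mul_apply, ← hb']
        _ = a (b v) := by rw [← hlen]; exact ha2 _ _
        _ = (a * b) v := rfl
  inv_mem' := by
    intro a ha
    obtain ⟨ha1, ha2⟩ := ha
    show IsTreeAutFun ⇑a⁻¹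
    have hlen : ∀ v : Vertex, (a⁻¹ v).length = v.length := by
      intro v
      have h := ha1 (a⁻¹ v)
      rw [show a (a⁻¹ v) = v from a.apply_symm_apply v] at h
      exact h.symm ▸ rfl
    refine ⟨hlen, fun v w => ?_⟩
    have htl : ((a⁻¹ (v ++ w)).take v.length).length = v.length := by
      rw [List.length_take, hlen, List.length_append]
      omega
    have key : a ((a⁻¹ (v ++ w)).take v.length) = v := by
      have h2 := ha2 ((a⁻¹ (v ++ w)).take v.length) ((a⁻¹ (v ++ w)).drop v.length)
      rw [List.take_append_drop, htl, show a (a⁻¹ (v ++ w)) = v ++ w from a.apply_symm_apply (v ++ w)] at h2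
      rw [← h2]
      simpa using List.take_left (l₁ := v) (l₂ := w)
    have h3 := congrArg (⇑a⁻¹) key
    rwa [show a⁻¹ (a ((a⁻¹ (v ++ w)).take v.length)) = (a⁻¹ (v ++ w)).take v.length from
      a.symm_apply_apply _] at h3

/-- wreath recursion, forward map: `(g,h)σᵗ` -/
def wrFun (g h : Vertex → Vertex) (t : Bool) : Vertex → Vertex
  | [] => []
  | x :: v => (xor x t) :: (cond x (h v) (g v))

/-- wreath recursion, inverse map -/
def wrFunInv (g h : Vertex → Vertex) (t : Bool) : Vertex → Vertex
  | [] => []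
  | y :: w => (xor y t) :: (cond (xor y t) (h w) (g w))

/-- `(g,h)σᵗ` as a permutation of the vertices. -/
def wrPerm (g h : Equiv.Perm Vertex) (t : Bool) : Equiv.Perm Vertex where
  toFun := wrFun ⇑g ⇑h t
  invFun := wrFunInv ⇑g.symm ⇑h.symm t
  left_inv := by
    intro v
    cases v with
    | nil => rfl
    | cons x v => cases x <;> cases t <;> simp [wrFun, wrFunInv]
  right_inv := by
    intro v
    cases v with
    | nil => rfl
    | cons x v => cases x <;> cases t <;> simp [wrFun, wrFunInv]

/-- The element `(g,h)σᵗ` of `Ω`: acts on the first level by `σᵗ` (where `σ` is the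
swap of the two level-one subtrees), with section `g` at the vertex `0` and section
`h` at the vertex `1`.  Thus `(γ₀,γ₁)τ` of the wreath recursion
`Ω ≃ (Ω × Ω) ⋊ S₂` is `wr γ₀ γ₁ t` (`t = true` iff `τ = σ`). -/
def wr (g h : TreeAut) (t : Bool) : TreeAut :=
  ⟨wrPerm g.1 h.1 t, by
    have hg : IsTreeAutFun ⇑g.1 := g.2
    have hh : IsTreeAutFun ⇑h.1 := h.2
    constructor
    · intro v
      cases v with
      | nil => rfl
      | cons x v =>
        cases x <;> simp [wrPerm, wrFun, hg.1, hh.1]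
    · intro v w
      cases v with
      | nil => simp [wrPerm, wrFun]
      | cons x v =>
        cases x <;> simp [wrPerm, wrFun, hg.2, hh.2]⟩

/-- Application of a tree automorphism to a vertex. -/
def ap (γ : TreeAut) (v : Vertex) : Vertex := γ.1 v

/-- The permutation induced by `γ ∈ Ω` on level `n` of the tree. -/
def levelPerm (n : ℕ) (γ : TreeAut) : Equiv.Perm (List.Vector Bool n) where
  toFun v := ⟨γ.1 v.1, by
    have h : IsTreeAutFun ⇑γ.1 := γ.2
    rw [h.1 v.1]; exact v.2⟩
  invFun v := ⟨γ.1.symm v.1, by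
    have h : IsTreeAutFun ⇑γ.1 := γ.2
    have h2 := h.1 (γ.1.symm v.1)
    rw [Equiv.apply_symm_apply] at h2
    exact h2.symm.trans v.2⟩
  left_inv v := Subtype.ext (Equiv.symm_apply_apply _ _)
  right_inv v := Subtype.ext (Equiv.apply_symm_apply _ _)

/-- Restriction to level `n` as a group homomorphism. -/
def levelHom (n : ℕ) : TreeAut →* Equiv.Perm (List.Vector Bool n) where
  toFun := levelPerm n
  map_one' := Equiv.ext fun v => Subtype.ext rfl
  map_mul' := fun g h => Equiv.ext fun v => Subtype.ext rfl

/-- `sgn_n`: the sign of the permutation induced on level `n`. -/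
def sgn (n : ℕ) (γ : TreeAut) : ℤˣ := Equiv.Perm.sign (levelPerm n γ)

/-- An odometer: acts as a single `2^n`-cycle on each level `n ≥ 1`. -/
def IsOdometer (γ : TreeAut) : Prop :=
  ∀ n : ℕ, 1 ≤ n → (levelPerm n γ).IsCycle ∧ (levelPerm n γ).support = Finset.univ

/-- The profinite topology on `Ω`: the coarsest topology making all level
restrictions (to the discrete finite groups) continuous. -/
instance : TopologicalSpace TreeAut :=
  ⨅ n : ℕ, TopologicalSpace.induced (levelPerm n) ⊥

/-- A vertex `w` is in a stable cycle of `γ` of length `k`: its `γ`-orbit has exactly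
`k` elements, and for every level `m` above the level of `w`, all level-`m` vertices
lying above this orbit are in one single `γ`-cycle (necessarily of length
`2^(m - n) * k`, which we record via the periodicity condition). -/
def InStableCycle (γ : TreeAut) (w : Vertex) (k : ℕ) : Prop :=
  0 < k ∧ ap (γ ^ k) w = w ∧ (∀ j : ℕ, 0 < j → j < k → ap (γ ^ j) w ≠ w) ∧
  (∀ u : Vertex, w.length < u.length → (∃ i : ℕ, u.take w.length = ap (γ ^ i) w) →
    (ap (γ ^ (2 ^ (u.length - w.length) * k)) u = u ∧
      ∀ u' : Vertex, u'.length = u.length →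
        (∃ i : ℕ, u'.take w.length = ap (γ ^ i) w) → ∃ j : ℕ, ap (γ ^ j) u = u'))

/-- Self-similar subgroup: closed under taking sections (here the section of `γ` at
the first-level vertex `x` is characterized by `(xv)γ = (x)γ ⬝ (v)γₓ`). -/
def SelfSimilar (H : Subgroup TreeAut) : Prop :=
  ∀ γ ∈ H, ∀ x : Bool, ∀ δ : TreeAut,
    (∀ v : Vertex, ap γ (x :: v) = ap γ [x] ++ ap δ v) → δ ∈ H


lemma wr_mul (A B C D : TreeAut) (t₁ t₂ : Bool) :
    wr A B t₁ * wr C D t₂ = wr ((cond t₂ B A) * C) ((cond t₂ A B) * D) (xor t₁ t₂) := by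
  apply Subtype.ext
  apply Equiv.ext
  intro l
  cases l with
  | nil => cases t₁ <;> cases t₂ <;> rfl
  | cons x v => cases x <;> cases t₁ <;> cases t₂ <;> rfl

lemma wr_one : wr 1 1 false = 1 := by
  apply Subtype.ext
  apply Equiv.ext
  intro l
  cases l with
  | nil => rfl
  | cons x v => cases x <;> rfl

lemma apply_eq_of_levelPerm_eq {n : ℕ} {γ₁ γ₂ : TreeAut}
    (h : levelPerm n γ₁ = levelPerm n γ₂) {l : Vertex} (hl : l.length = n) :
    γ₁.1 l = γ₂.1 l :=
  congrArg (fun e : Equiv.Perm (List.Vector Bool n) => (e ⟨l, hl⟩).1) h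

lemma levelPerm_eq_of_apply_eq {n : ℕ} {γ₁ γ₂ : TreeAut}
    (h : ∀ l : Vertex, l.length = n → γ₁.1 l = γ₂.1 l) :
    levelPerm n γ₁ = levelPerm n γ₂ :=
  Equiv.ext fun v => Subtype.ext (h v.1 v.2)

lemma sec_eq (γ : TreeAut) (l : Vertex) (b : Bool) :
    γ.1 l = (γ.1 (l ++ [b])).take l.length := (γ.2.2 l [b]).symm

lemma levelPerm_diag_eq {n : ℕ} {γ₁ γ₂ : TreeAut}
    (h : levelPerm n γ₁ = levelPerm n γ₂) :
    levelPerm n (wr γ₁ γ₁ false) = levelPerm n (wr γ₂ γ₂ false) := by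
  apply levelPerm_eq_of_apply_eq
  intro l hl
  cases l with
  | nil => rfl
  | cons x v =>
    have hlv : (v ++ [false]).length = n := by simp at hl ⊢; omega
    have hv : γ₁.1 v = γ₂.1 v := by
      rw [sec_eq γ₁ v false, sec_eq γ₂ v false, apply_eq_of_levelPerm_eq h hlv]
    show wrFun ⇑γ₁.1 ⇑γ₁.1 false (x :: v) = wrFun ⇑γ₂.1 ⇑γ₂.1 false (x :: v)
    cases x <;> simp [wrFun, hv]


lemma isOpen_of_levelPerm_invariant (n : ℕ) (S : Set TreeAut)
    (hS : ∀ γ₁ γ₂ : TreeAut, levelPerm n γ₁ = levelPerm n γ₂ → γ₁ ∈ S → γ₂ ∈ S) :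
    IsOpen S := by
  have hle : (inferInstance : TopologicalSpace TreeAut) ≤
      TopologicalSpace.induced (levelPerm n) ⊥ :=
    iInf_le (fun n => TopologicalSpace.induced (levelPerm n) ⊥) n
  have hSeq : S = (levelPerm n) ⁻¹' (levelPerm n '' S) := by
    apply Set.Subset.antisymm (Set.subset_preimage_image _ _)
    rintro γ ⟨γ₀, hγ₀, hEq⟩
    exact hS γ₀ γ hEq hγ₀
  rw [hSeq]
  have hop : @IsOpen _ (TopologicalSpace.induced (levelPerm n) ⊥)
      ((levelPerm n) ⁻¹' (levelPerm n '' S)) := by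
    apply @isOpen_induced _ _ ⊥
    letI : TopologicalSpace (Equiv.Perm (List.Vector Bool n)) := ⊥
    haveI : DiscreteTopology (Equiv.Perm (List.Vector Bool n)) := ⟨rfl⟩
    exact isOpen_discrete _
  exact hop.mono hle

lemma continuous_diag : Continuous (fun γ : TreeAut => wr γ γ false) := by
  have key : @Continuous _ _ _ (⨅ n : ℕ, TopologicalSpace.induced (levelPerm n) ⊥)
      (fun γ : TreeAut => wr γ γ false) := by
    rw [continuous_iInf_rng]
    intro n
    rw [continuous_induced_rng]
    rw [continuous_def]
    intro U _
    apply isOpen_of_levelPerm_invariant n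
    intro γ₁ γ₂ h hmem
    simp only [Set.mem_preimage, Function.comp] at hmem ⊢
    rw [← levelPerm_diag_eq h]
    exact hmem
  exact key


lemma wr_diag_mul (g h : TreeAut) :
    wr g g false * wr h h false = wr (g * h) (g * h) false := by
  rw [wr_mul]; rfl

lemma wr_I0 (g : TreeAut) : wr 1 g false * wr g 1 false = wr g g false := by
  rw [wr_mul]; simp

lemma wr_I1 (g : TreeAut) : wr g 1 true * wr g 1 true = wr g g false := by
  rw [wr_mul]; simp

lemma wr_I2 (g : TreeAut) : wr 1 g true * wr 1 g true = wr g g false := by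
  rw [wr_mul]; simp

-- (g,1) * (k,1)σ = (k,1)σ * (1,g)  (both equal (k,g)σ)
lemma wr_L3 (g k : TreeAut) :
    wr g 1 false * wr k 1 true = wr k 1 true * wr 1 g false := by
  rw [wr_mul, wr_mul]; simp

/-- for every g in G = ⟨⟨a₁,…,a_r⟩⟩ (topological closure of the
generated subgroup), the diagonal (g,g) belongs to G. -/
theorem diag_mem_closure
    (r s : ℕ) (hr : 3 ≤ r) (hs1 : 1 < s) (hsr : s ≤ r)
    (a : ZMod r → TreeAut)
    (ha1 : a 1 = wr (a (r : ZMod r)) 1 true)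
    (hmid : ∀ i : ℕ, 2 ≤ i → i ≤ s - 1 → a (i : ZMod r) = wr 1 (a ((i - 1 : ℕ) : ZMod r)) false)
    (has : a (s : ZMod r) = wr 1 (a ((s - 1 : ℕ) : ZMod r)) true)
    (hhi : ∀ i : ℕ, s + 1 ≤ i → i ≤ r → a (i : ZMod r) = wr (a ((i - 1 : ℕ) : ZMod r)) 1 false)
    :
    ∀ γ ∈ closure ((Subgroup.closure (Set.range a) : Subgroup TreeAut) : Set TreeAut),
      wr γ γ false ∈
        closure ((Subgroup.closure (Set.range a) : Subgroup TreeAut) : Set TreeAut) := by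
  intro γ hγ
  set H := Subgroup.closure (Set.range a) with hHdef
  haveI : NeZero r := ⟨by omega⟩
  have hmemA : ∀ z : ZMod r, a z ∈ H := fun z => Subgroup.subset_closure ⟨z, rfl⟩
  -- diagonal of each generator is in H
  have hgen : ∀ z : ZMod r, wr (a z) (a z) false ∈ H := by
    intro z
    obtain ⟨i, h1i, hir, rfl⟩ : ∃ i : ℕ, 1 ≤ i ∧ i ≤ r ∧ (i : ZMod r) = z := by
      by_cases h0 : z = 0
      · exact ⟨r, by omega, le_refl r, by simp [h0]⟩
      · refine ⟨z.val, ?_, le_of_lt (ZMod.val_lt z), ZMod.natCast_rightInverse z⟩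
        have hne : z.val ≠ 0 := fun hv => h0 ((ZMod.val_eq_zero z).mp hv)
        omega
    by_cases hD : i = r
    · -- diagonal of a_r is a₁²
      rw [hD]
      have key : a 1 * a 1 = wr (a (r : ZMod r)) (a (r : ZMod r)) false := by
        rw [ha1, wr_I1]
      rw [← key]; exact mul_mem (hmemA 1) (hmemA 1)
    · by_cases hB : i = s - 1
      · -- diagonal of a_{s-1} is a_s²
        rw [hB]
        have key : a (s : ZMod r) * a (s : ZMod r)
            = wr (a ((s - 1 : ℕ) : ZMod r)) (a ((s - 1 : ℕ) : ZMod r)) false := by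
          rw [has, wr_I2]
        rw [← key]; exact mul_mem (hmemA _) (hmemA _)
      · by_cases hA : i + 2 ≤ s
        · -- 1 ≤ i ≤ s - 2 : diagonal of a_i is a_{i+1} ⬝ (a₁ a_{i+1} a₁⁻¹)
          have hrec : a ((i + 1 : ℕ) : ZMod r) = wr 1 (a ((i : ℕ) : ZMod r)) false := by
            have := hmid (i + 1) (by omega) (by omega)
            simpa using this
          set g := a ((i : ℕ) : ZMod r) with hg
          have h1 : wr g 1 false * a 1 = a 1 * a ((i + 1 : ℕ) : ZMod r) := by
            rw [ha1, hrec, wr_L3]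
          have hX : wr g 1 false = a 1 * a ((i + 1 : ℕ) : ZMod r) * (a 1)⁻¹ :=
            eq_mul_inv_of_mul_eq h1
          have key : a ((i + 1 : ℕ) : ZMod r) * (a 1 * a ((i + 1 : ℕ) : ZMod r) * (a 1)⁻¹)
              = wr g g false := by
            rw [← hX, hrec, wr_I0]
          rw [← key]
          exact mul_mem (hmemA _) (mul_mem (mul_mem (hmemA _) (hmemA _)) (inv_mem (hmemA _)))
        · -- s ≤ i ≤ r - 1 : diagonal of a_i is (a₁⁻¹ a_{i+1} a₁) ⬝ a_{i+1}
          have hs_le : s ≤ i := by omega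
          have hi_lt : i + 1 ≤ r := by omega
          have hrec : a ((i + 1 : ℕ) : ZMod r) = wr (a ((i : ℕ) : ZMod r)) 1 false := by
            have := hhi (i + 1) (by omega) (by omega)
            simpa using this
          set g := a ((i : ℕ) : ZMod r) with hg
          have h1 : a 1 * wr 1 g false = a ((i + 1 : ℕ) : ZMod r) * a 1 := by
            rw [ha1, hrec, ← wr_L3]
          have hY : wr 1 g false = (a 1)⁻¹ * (a ((i + 1 : ℕ) : ZMod r) * a 1) :=
            eq_inv_mul_of_mul_eq h1
          have key : ((a 1)⁻¹ * (a ((i + 1 : ℕ) : ZMod r) * a 1)) * a ((i + 1 : ℕ) : ZMod r)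
              = wr g g false := by
            rw [← hY, hrec, wr_I0]
          rw [← key]
          exact mul_mem (mul_mem (inv_mem (hmemA 1)) (mul_mem (hmemA _) (hmemA _))) (hmemA _)
  -- diagonal of every element of H is in H
  have hδH : ∀ g ∈ H, wr g g false ∈ H := by
    intro g hg
    refine Subgroup.closure_induction (p := fun g _ => wr g g false ∈ H)
      ?_ ?_ ?_ ?_ hg
    · rintro x ⟨z, rfl⟩
      exact hgen z
    · show wr (1 : TreeAut) (1 : TreeAut) false ∈ H
      rw [wr_one]; exact one_mem H
    · intro x y _ _ px py
      show wr (x * y) (x * y) false ∈ H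
      rw [← wr_diag_mul]; exact mul_mem px py
    · intro x _ px
      show wr x⁻¹ x⁻¹ false ∈ H
      have hinv : wr x⁻¹ x⁻¹ false = (wr x x false)⁻¹ := by
        apply eq_inv_of_mul_eq_one_left
        rw [wr_diag_mul]
        simp [wr_one]
      rw [hinv]; exact inv_mem px
  -- conclude by continuity
  have hsub : (fun g : TreeAut => wr g g false) '' (H : Set TreeAut) ⊆ (H : Set TreeAut) := by
    rintro _ ⟨g, hg, rfl⟩
    exact hδH g hg
  have himg := image_closure_subset_closure_image (s := (H : Set TreeAut)) continuous_diag
  exact closure_mono hsub (himg ⟨γ, hγ, rfl⟩)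


end BinTree
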